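/- The constant γ = 1/2 + (1/2)·Σ_{t≥2} Π_{i=2}^t ((i-1)/(2^i - i - 1)) satisfies 1.3296 < γ < 1.3297. -/
import Mathlib

noncomputable def gg (i : ℕ) : ℝ := ((i : ℝ) - 1) / (2 ^ i - (i : ℝ) - 1)
noncomputable def ff (t : ℕ) : ℝ := ∏ i ∈ Finset.Icc 2 (t + 2), gg i

lemma nat_pow (i : ℕ) (hi : 2 ≤ i) : i + 2 ≤ 2 ^ i := by
  induction i, hi using Nat.le_induction with
  | base => norm_num
  | succ n hn ih => have : 2 ^ (n+1) = 2 * 2^n := by ring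
                    omega

lemma nat_pow3 (i : ℕ) (hi : 3 ≤ i) : 3 * i ≤ 2 ^ i + 1 := by
  induction i, hi using Nat.le_induction with
  | base => norm_num
  | succ n hn ih => have : 2 ^ (n+1) = 2 * 2^n := by ring
                    omega

lemma nat_pow32 (i : ℕ) (hi : 8 ≤ i) : 33 * i ≤ 2 ^ i + 31 := by
  induction i, hi using Nat.le_induction with
  | base => norm_num
  | succ n hn ih => have : 2 ^ (n+1) = 2 * 2^n := by ring
                    omega

lemma denom_pos (i : ℕ) (hi : 2 ≤ i) : (1 : ℝ) ≤ 2 ^ i - (i : ℝ) - 1 := by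
  have := nat_pow i hi
  have : ((i : ℝ) + 2) ≤ 2 ^ i := by exact_mod_cast this
  linarith

lemma gg_nonneg (i : ℕ) (hi : 2 ≤ i) : 0 ≤ gg i := by
  have h := denom_pos i hi
  have : (1:ℝ) ≤ (i:ℝ) := by exact_mod_cast Nat.one_le_of_lt hi
  exact div_nonneg (by linarith) (by linarith)

lemma gg_half (i : ℕ) (hi : 3 ≤ i) : gg i ≤ 1 / 2 := by
  have h := denom_pos i (by omega)
  have h3 : (3:ℝ) * i ≤ 2 ^ i + 1 := by exact_mod_cast nat_pow3 i hi
  rw [gg, div_le_div_iff₀ (by linarith) (by norm_num)]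
  linarith

lemma gg_32 (i : ℕ) (hi : 8 ≤ i) : gg i ≤ 1 / 32 := by
  have h := denom_pos i (by omega)
  have h3 : (33:ℝ) * i ≤ 2 ^ i + 31 := by exact_mod_cast nat_pow32 i hi
  rw [gg, div_le_div_iff₀ (by linarith) (by norm_num)]
  linarith

lemma ff_nonneg (t : ℕ) : 0 ≤ ff t := by
  refine Finset.prod_nonneg fun i hi => gg_nonneg i ?_
  exact (Finset.mem_Icc.mp hi).1

lemma ff_succ (t : ℕ) : ff (t + 1) = ff t * gg (t + 3) := by
  rw [ff, ff, show t + 1 + 2 = (t + 2) + 1 from rfl,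
    Finset.prod_Icc_succ_top (by omega : 2 ≤ t + 2 + 1)]

lemma ff_le (t : ℕ) : ff t ≤ (1/2) ^ t := by
  induction t with
  | zero => norm_num [ff, gg]
  | succ n ih =>
      rw [ff_succ, pow_succ]
      exact mul_le_mul ih (gg_half _ (by omega)) (gg_nonneg _ (by omega)) (by positivity)

lemma ff_summable : Summable ff :=
  Summable.of_nonneg_of_le ff_nonneg ff_le (summable_geometric_of_lt_one (by norm_num) (by norm_num))

lemma ff_vals : ff 0 = 1 ∧ ff 1 = 1/2 ∧ ff 2 = 3/22 ∧ ff 3 = 3/143 ∧ ff 4 = 5/2717 ∧ ff 5 = 1/10868 := by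
  have h0 : ff 0 = 1 := by norm_num [ff, gg]
  have h1 : ff 1 = 1/2 := by rw [ff_succ 0, h0]; norm_num [gg]
  have h2 : ff 2 = 3/22 := by rw [ff_succ 1, h1]; norm_num [gg]
  have h3 : ff 3 = 3/143 := by rw [ff_succ 2, h2]; norm_num [gg]
  have h4 : ff 4 = 5/2717 := by rw [ff_succ 3, h3]; norm_num [gg]
  have h5 : ff 5 = 1/10868 := by rw [ff_succ 4, h4]; norm_num [gg]
  exact ⟨h0, h1, h2, h3, h4, h5⟩

lemma tail_le (t : ℕ) : ff (t + 6) ≤ (1/10868) / 32 * (1/32) ^ t := by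
  have h5 : ff 5 = 1/10868 := ff_vals.2.2.2.2.2
  induction t with
  | zero =>
      have : ff 6 = ff 5 * gg 8 := ff_succ 5
      rw [show (0:ℕ) + 6 = 6 from rfl, this, h5]
      simp only [pow_zero, mul_one]
      have := gg_32 8 le_rfl
      have := gg_nonneg 8 (by norm_num)
      rw [div_div]
      nlinarith
  | succ n ih =>
      have heq : ff (n + 1 + 6) = ff (n + 6) * gg (n + 9) := by
        rw [show n + 1 + 6 = (n + 6) + 1 from rfl, ff_succ]
      rw [heq, pow_succ]
      have h32 := gg_32 (n + 9) (by omega)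
      have hnn := gg_nonneg (n + 9) (by omega)
      have hfn := ff_nonneg (n + 6)
      calc ff (n+6) * gg (n+9) ≤ ((1/10868)/32 * (1/32)^n) * (1/32) :=
            mul_le_mul ih h32 hnn (by positivity)
        _ = (1/10868)/32 * ((1/32)^n * (1/32)) := by ring

lemma sum_bounds : 1.6592 < ∑' t : ℕ, ff t ∧ (∑' t : ℕ, ff t) < 1.6594 := by
  obtain ⟨h0, h1, h2, h3, h4, h5⟩ := ff_vals
  have hs := ff_summable
  have hsplit := (Summable.sum_add_tsum_nat_add 6 hs).symm
  have hpartial : ∑ t ∈ Finset.range 6, ff t = 1 + 1/2 + 3/22 + 3/143 + 5/2717 + 1/10868 := by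
    rw [Finset.sum_range_succ, Finset.sum_range_succ, Finset.sum_range_succ,
      Finset.sum_range_succ, Finset.sum_range_succ, Finset.sum_range_one,
      h0, h1, h2, h3, h4, h5]
  have htail_nonneg : 0 ≤ ∑' t : ℕ, ff (t + 6) := tsum_nonneg fun t => ff_nonneg _
  have hgeom : Summable (fun t : ℕ => (1/10868 : ℝ) / 32 * (1/32) ^ t) :=
    (summable_geometric_of_lt_one (by norm_num) (by norm_num)).mul_left _
  have htail_le : ∑' t : ℕ, ff (t + 6) ≤ (1/10868) / 32 * (1 - 1/32)⁻¹ := by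
    have := Summable.tsum_le_tsum tail_le ((summable_nat_add_iff 6).mpr hs) hgeom
    rwa [tsum_mul_left, tsum_geometric_of_lt_one (by norm_num) (by norm_num)] at this
  constructor
  · rw [hsplit, hpartial]; norm_num at htail_nonneg ⊢; linarith
  · rw [hsplit, hpartial]; norm_num at htail_le ⊢; linarith

theorem stmt_14 :
    1.3296 < (1 / 2 : ℝ) + (1 / 2) *
        ∑' t : ℕ, ∏ i ∈ Finset.Icc 2 (t + 2), ((i : ℝ) - 1) / (2 ^ i - (i : ℝ) - 1) ∧
      (1 / 2 : ℝ) + (1 / 2) *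
        ∑' t : ℕ, ∏ i ∈ Finset.Icc 2 (t + 2), ((i : ℝ) - 1) / (2 ^ i - (i : ℝ) - 1)
        < 1.3297 := by
  have h : ∑' t : ℕ, ∏ i ∈ Finset.Icc 2 (t + 2), ((i : ℝ) - 1) / (2 ^ i - (i : ℝ) - 1)
      = ∑' t : ℕ, ff t := rfl
  rw [h]
  obtain ⟨hl, hu⟩ := sum_bounds
  norm_num at hl hu ⊢
  constructor <;> linarith
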